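/- Let L be an abelian group and A an L-graded commutative ring. Then the following are equivalent: (i) A has a unique maximal homogeneous ideal (A is L-local); (ii) the ring A_0 is local. -/

import Mathlib

variable {L A : Type*} [AddCommGroup L] [DecidableEq L] [CommRing A]

/-- A maximal homogeneous ideal of an `L`-graded ring: a proper homogeneous ideal such
that no homogeneous ideal lies strictly between it and the whole ring. -/
def IsMaximalHomogeneousIdeal (𝒜 : L → AddSubgroup A) [GradedRing 𝒜] (m : Ideal A) : Prop :=
  Ideal.IsHomogeneous 𝒜 m ∧ m ≠ ⊤ ∧
    ∀ J : Ideal A, Ideal.IsHomogeneous 𝒜 J → m < J → J = ⊤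

open DirectSum

section Aux

variable (𝒜 : L → AddSubgroup A) [GradedRing 𝒜]

/-- A degree-zero element is a unit in `A` iff it is a unit in `𝒜 0`. -/
private lemma aux_isUnit_coe_iff (a : 𝒜 0) : IsUnit (a : A) ↔ IsUnit a := by
  constructor
  · intro h
    obtain ⟨b, hb⟩ := h.exists_right_inv
    have h1 : (decompose 𝒜 ((a : A) * b) ((0 : L) + 0) : A) = (a : A) * decompose 𝒜 b 0 :=
      DirectSum.coe_decompose_mul_add_of_left_mem 𝒜 a.2
    rw [zero_add, hb, DirectSum.decompose_of_mem_same 𝒜 (SetLike.one_mem_graded 𝒜)] at h1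
    refine IsUnit.of_mul_eq_one (a := a) ⟨(decompose 𝒜 b 0 : A), SetLike.coe_mem _⟩ ?_
    exact Subtype.ext h1.symm
  · intro h
    obtain ⟨b, hb⟩ := h.exists_right_inv
    have : (a : A) * (b : A) = 1 := by
      rw [← SetLike.GradeZero.coe_mul, hb]; rfl
    exact IsUnit.of_mul_eq_one _ this

/-- The ideal generated by all homogeneous nonunits. -/
private def bigM : Ideal A :=
  Ideal.span {x : A | SetLike.IsHomogeneousElem 𝒜 x ∧ ¬ IsUnit x}

private lemma bigM_homogeneous : (bigM 𝒜).IsHomogeneous 𝒜 :=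
  Ideal.homogeneous_span _ _ fun _ hx => hx.1

/-- Every proper homogeneous ideal is contained in `bigM`. -/
private lemma le_bigM {I : Ideal A} (hI : I.IsHomogeneous 𝒜) (hne : I ≠ ⊤) :
    I ≤ bigM 𝒜 := by
  classical
  intro x hx
  rw [← DirectSum.sum_support_decompose 𝒜 x]
  refine Ideal.sum_mem _ fun i _ => Ideal.subset_span ?_
  refine ⟨⟨i, SetLike.coe_mem _⟩, fun hu => hne ?_⟩
  exact Ideal.eq_top_of_isUnit_mem _ (hI i hx) hu

/-- The additive degree-zero component map `A →+ 𝒜 0`. -/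
private def psi : A →+ 𝒜 0 :=
  (DFinsupp.evalAddMonoidHom (0 : L)).comp (DirectSum.decomposeAddEquiv 𝒜).toAddMonoidHom

private lemma psi_apply (x : A) : psi 𝒜 x = decompose 𝒜 x 0 := rfl

/-- If `𝒜 0` is local then `bigM` is a proper ideal. -/
private lemma bigM_ne_top (hloc : IsLocalRing (𝒜 0)) : bigM 𝒜 ≠ ⊤ := by
  intro htop
  have h1 : (1 : A) ∈ bigM 𝒜 := htop ▸ Submodule.mem_top
  rw [bigM, Ideal.span, Submodule.mem_span_set] at h1
  obtain ⟨c, hsupp, hsum⟩ := h1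
  have key : ∀ z ∈ c.support, psi 𝒜 (c z • z) ∈ IsLocalRing.maximalIdeal (𝒜 0) := by
    intro z hz
    obtain ⟨⟨i, hzi⟩, hznu⟩ := hsupp hz
    rw [IsLocalRing.mem_maximalIdeal, mem_nonunits_iff]
    intro hu
    apply hznu
    have hcoe : (psi 𝒜 (c z • z) : A) = (decompose 𝒜 (c z) (-i) : A) * z := by
      rw [psi_apply, smul_eq_mul]
      have h0 : (decompose 𝒜 (c z * z) (-i + i) : A) = (decompose 𝒜 (c z) (-i) : A) * z :=
        DirectSum.coe_decompose_mul_add_of_right_mem 𝒜 hzi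
      rwa [neg_add_cancel] at h0
    have huA : IsUnit ((decompose 𝒜 (c z) (-i) : A) * z) := by
      rw [← hcoe]
      exact (aux_isUnit_coe_iff 𝒜 _).mpr hu
    exact isUnit_of_mul_isUnit_right huA
  have h1m : (1 : 𝒜 0) ∈ IsLocalRing.maximalIdeal (𝒜 0) := by
    have hψ := congrArg (psi 𝒜) hsum
    rw [Finsupp.sum, map_sum] at hψ
    have hψ1 : psi 𝒜 (1 : A) = 1 :=
      Subtype.ext (DirectSum.decompose_of_mem_same 𝒜 (SetLike.one_mem_graded 𝒜))
    rw [hψ1] at hψ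
    rw [← hψ]
    exact Ideal.sum_mem _ key
  exact (IsLocalRing.maximalIdeal.isMaximal (𝒜 0)).ne_top
    (Ideal.eq_top_of_isUnit_mem _ h1m isUnit_one)

/-- Zorn: every proper homogeneous ideal lies in a maximal homogeneous ideal. -/
private lemma exists_maximal_homogeneous_le {I : Ideal A} (hI : I.IsHomogeneous 𝒜)
    (hne : I ≠ ⊤) : ∃ M, I ≤ M ∧ IsMaximalHomogeneousIdeal 𝒜 M := by
  set s : Set (Ideal A) := {J | J.IsHomogeneous 𝒜 ∧ J ≠ ⊤} with hs
  have ih : ∀ c ⊆ s, IsChain (· ≤ ·) c → ∀ y ∈ c, ∃ ub ∈ s, ∀ z ∈ c, z ≤ ub := by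
    intro c hcs hchain y hy
    refine ⟨sSup c, ⟨Ideal.IsHomogeneous.sSup fun J hJ => (hcs hJ).1, ?_⟩,
      fun z hz => le_sSup hz⟩
    intro htop
    have h1 : (1 : A) ∈ sSup c := htop ▸ Submodule.mem_top
    obtain ⟨J, hJc, h1J⟩ :=
      (Submodule.mem_sSup_of_directed ⟨y, hy⟩ hchain.directedOn).mp h1
    exact (hcs hJc).2 ((Ideal.eq_top_iff_one J).mpr h1J)
  obtain ⟨M, hIM, hMs, hMmax⟩ := zorn_le_nonempty₀ s ih I ⟨hI, hne⟩
  refine ⟨M, hIM, hMs.1, hMs.2, fun J hJ hMJ => ?_⟩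
  by_contra hJtop
  exact absurd (hMmax ⟨hJ, hJtop⟩ hMJ.le) hMJ.not_ge

end Aux

/-- An `L`-graded commutative ring is `L`-local (has a unique maximal homogeneous ideal)
if and only if its degree-zero subring `A₀` is a local ring. -/
theorem lLocal_iff_gradeZero_isLocalRing (𝒜 : L → AddSubgroup A) [GradedRing 𝒜] :
    (∃! m : Ideal A, IsMaximalHomogeneousIdeal 𝒜 m) ↔ IsLocalRing (𝒜 0) := by
  constructor
  · rintro ⟨m, hm, huniq⟩
    -- every proper homogeneous ideal is contained in `m`
    have hle : ∀ I : Ideal A, I.IsHomogeneous 𝒜 → I ≠ ⊤ → I ≤ m := by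
      intro I hI hne
      obtain ⟨M, hIM, hM⟩ := exists_maximal_homogeneous_le 𝒜 hI hne
      exact (huniq M hM) ▸ hIM
    have hAnt : Nontrivial A := by
      by_contra h
      rw [not_nontrivial_iff_subsingleton] at h
      exact hm.2.1 (Subsingleton.elim _ _)
    have : Nontrivial (𝒜 0) := by
      refine ⟨1, 0, fun h => one_ne_zero (α := A) ?_⟩
      calc (1 : A) = ((1 : 𝒜 0) : A) := rfl
        _ = ((0 : 𝒜 0) : A) := congrArg _ h
        _ = 0 := rfl
    refine IsLocalRing.of_isUnit_or_isUnit_one_sub_self fun a => ?_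
    by_contra hcon
    push_neg at hcon
    obtain ⟨ha, ha'⟩ := hcon
    have hAa : ¬ IsUnit (a : A) := fun h => ha ((aux_isUnit_coe_iff 𝒜 a).mp h)
    have hAa' : ¬ IsUnit ((1 : A) - (a : A)) := by
      intro h
      refine ha' ((aux_isUnit_coe_iff 𝒜 (1 - a)).mp ?_)
      have : ((1 - a : 𝒜 0) : A) = (1 : A) - (a : A) := by
        push_cast
        rfl
      rw [this]; exact h
    have mem1 : (a : A) ∈ m := by
      refine hle (Ideal.span {(a : A)}) ?_ ?_ (Ideal.subset_span rfl)
      · exact Ideal.homogeneous_span _ _ fun x hx => hx ▸ ⟨0, a.2⟩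
      · exact fun h => hAa (Ideal.span_singleton_eq_top.mp h)
    have mem2 : ((1 : A) - (a : A)) ∈ m := by
      refine hle (Ideal.span {(1 : A) - (a : A)}) ?_ ?_ (Ideal.subset_span rfl)
      · refine Ideal.homogeneous_span _ _ fun x hx => hx ▸ ⟨0, ?_⟩
        exact sub_mem (SetLike.one_mem_graded 𝒜) a.2
      · exact fun h => hAa' (Ideal.span_singleton_eq_top.mp h)
    have : (1 : A) ∈ m := by
      have := Ideal.add_mem m mem1 mem2
      rwa [add_sub_cancel] at this
    exact hm.2.1 ((Ideal.eq_top_iff_one m).mpr this)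
  · intro hloc
    refine ⟨bigM 𝒜, ⟨bigM_homogeneous 𝒜, bigM_ne_top 𝒜 hloc, fun J hJ hMJ => ?_⟩, ?_⟩
    · by_contra hJtop
      exact hMJ.not_ge (le_bigM 𝒜 hJ hJtop)
    · rintro m' ⟨hm'h, hm'ne, hm'max⟩
      have hle : m' ≤ bigM 𝒜 := le_bigM 𝒜 hm'h hm'ne
      rcases eq_or_lt_of_le hle with h | h
      · exact h
      · exact absurd (hm'max _ (bigM_homogeneous 𝒜) h) (bigM_ne_top 𝒜 hloc)
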